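/- Let R be a commutative Bezout domain, a ∈ R nonzero, and b̄ the image in R/aR of an element b dividing a. Then Ann(Ann(b̄·(R/aR))) = b̄·(R/aR), i.e., every principal ideal of R/aR is the annihilator of a principal ideal (double annihilator property). -/
import Mathlib

lemma ann_span_aux (R : Type*) [CommRing R] [IsDomain R] (b c : R) (hb : b ≠ 0) :
    Submodule.annihilator
        (Ideal.span {Ideal.Quotient.mk (Ideal.span {b * c}) b}
          : Ideal (R ⧸ (Ideal.span {b * c} : Ideal R)))
      = Ideal.span {Ideal.Quotient.mk (Ideal.span {b * c}) c} := by
  ext x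
  obtain ⟨y, rfl⟩ := Ideal.Quotient.mk_surjective x
  have key : Ideal.Quotient.mk (Ideal.span {b * c}) y ∈
      Submodule.annihilator (Ideal.span {Ideal.Quotient.mk (Ideal.span {b * c}) b}) ↔
      Ideal.Quotient.mk (Ideal.span {b * c}) (y * b) = 0 := by
    rw [Submodule.mem_annihilator]
    constructor
    · intro h
      have := h _ (Ideal.subset_span rfl)
      rwa [smul_eq_mul, ← map_mul] at this
    · intro h n hn
      rw [Ideal.mem_span_singleton] at hn
      obtain ⟨z, rfl⟩ := hn
      rw [smul_eq_mul, ← mul_assoc, ← map_mul, h, zero_mul]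
  rw [key, Ideal.Quotient.eq_zero_iff_mem, Ideal.mem_span_singleton]
  constructor
  · rintro ⟨z, hz⟩
    have : y = c * z := by
      apply mul_left_cancel₀ hb
      rw [mul_comm y b] at hz; linear_combination hz
    rw [Ideal.mem_span_singleton']
    exact ⟨Ideal.Quotient.mk _ z, by rw [← map_mul, mul_comm z c, ← this]⟩
  · intro h
    rw [Ideal.mem_span_singleton'] at h
    obtain ⟨z, hz⟩ := h
    obtain ⟨w, rfl⟩ := Ideal.Quotient.mk_surjective z
    rw [← map_mul, Ideal.Quotient.eq] at hz
    rw [Ideal.mem_span_singleton] at hz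
    obtain ⟨u, hu⟩ := hz
    exact ⟨w - u * b, by linear_combination (-b) * hu⟩

/-- In R/aR, for b dividing a, the double annihilator of the principal
ideal generated by the image of b is itself. -/
theorem double_annihilator_principal (R : Type*) [CommRing R] [IsDomain R] [IsBezout R]
    (a : R) (ha : a ≠ 0) (b : R) (hb : b ∣ a) :
    Submodule.annihilator
        (Submodule.annihilator
          (Ideal.span {Ideal.Quotient.mk (Ideal.span {a}) b}
            : Ideal (R ⧸ (Ideal.span {a} : Ideal R))))
      = Ideal.span {Ideal.Quotient.mk (Ideal.span {a}) b} := by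
  obtain ⟨c, rfl⟩ := hb
  have hb0 : b ≠ 0 := left_ne_zero_of_mul ha
  have hc0 : c ≠ 0 := right_ne_zero_of_mul ha
  rw [ann_span_aux R b c hb0]
  have := ann_span_aux R c b hc0
  rw [mul_comm c b] at this
  rw [this]
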